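/- Let (A, p, 0, ½, 1) be a mobi algebra with derived operations ā = p(1,a,0), a·b = p(0,a,b), and a∘b = p(a,b,1). Then the operations · and ∘ are dual to each other: for all a, b ∈ A, the complement of a·b equals b̄ ∘ ā, and the complement of a∘b equals b̄ · ā. -/
import Mathlib

/-- A mobi algebra: a set with a ternary operation `p` and constants `e0`, `half`, `e1`. -/
structure MobiAlgebra (A : Type*) where
  p : A → A → A → A
  e0 : A
  half : A
  e1 : A
  A1 : p e1 half e0 = half
  A2 : ∀ a, p e0 a e1 = a
  A3 : ∀ a b, p a b a = a
  A4 : ∀ a b, p a e0 b = a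
  A5 : ∀ a b, p a e1 b = b
  A6 : ∀ a a' b, p a half b = p a' half b → a = a'
  A7 : ∀ a b c1 c2 c3, p a (p c1 c2 c3) b = p (p a c1 b) c2 (p a c3 b)
  A8 : ∀ a1 a2 b1 b2 c,
    p (p a1 c b1) half (p a2 c b2) = p (p a1 half a2) c (p b1 half b2)

/-- The derived operations a·b = p(0,a,b) and a∘b = p(a,b,1) of a mobi
algebra are dual to each other via the complement ā = p(1,a,0):
¬(a·b) = b̄ ∘ ā and ¬(a∘b) = b̄ · ā. -/
theorem mobi_mul_circ_dual {A : Type*} (M : MobiAlgebra A) (a b : A) :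
    M.p M.e1 (M.p M.e0 a b) M.e0 =
      M.p (M.p M.e1 b M.e0) (M.p M.e1 a M.e0) M.e1 ∧
    M.p M.e1 (M.p a b M.e1) M.e0 =
      M.p M.e0 (M.p M.e1 b M.e0) (M.p M.e1 a M.e0) := by
  constructor
  · rw [M.A7, M.A7, M.A4, M.A5, M.A4]
  · rw [M.A7, M.A7, M.A5, M.A5, M.A4]
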